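/- arXiv:1512.02296 — 2 statements merged into one kernel-verified Lean document; each statement's English description precedes it below -/
import Mathlib

section
/- Let E be a row-finite directed graph with no sources in which no cycle has an entrance, and let (α,β) be an ancestry pair such that α or β contains a cycle. Then there is a cycle-free minimal ancestry pair (λ,μ) such that {(αx, βx) : x infinite, r(x)=s(α)} ⊆ {(λy, μy) : y infinite, r(y)=s(λ)} as subsets of E^∞ × E^∞. -/
/-- A directed graph: edges `E`, vertices `V`, range and source maps. -/
structure DirGraph where
  V : Type
  E : Type
  r : E → V
  s : E → V

/-- Shift an infinite path (sequence of edges) by `p`. -/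
def shift (p : ℕ) {α : Type} (x : ℕ → α) : ℕ → α := fun i => x (i + p)

namespace DirGraph

variable (G : DirGraph)

/-- `IsPath G v l u` : the list of edges `l` is a finite path with range `v` and
source `u` (edges are composed so that `s eᵢ = r eᵢ₊₁`). -/
inductive IsPath : G.V → List G.E → G.V → Prop
  | nil (v : G.V) : IsPath v [] v
  | cons (e : G.E) {l : List G.E} {u : G.V} :
      IsPath (G.s e) l u → IsPath (G.r e) (e :: l) u

/-- An infinite path: a sequence of edges with `s(xᵢ) = r(xᵢ₊₁)`. -/
def InfPath (x : ℕ → G.E) : Prop := ∀ i, G.s (x i) = G.r (x (i + 1))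

/-- Prepend a finite path (list of edges) to an infinite path. -/
def prepend (l : List G.E) (x : ℕ → G.E) : ℕ → G.E :=
  fun i => if h : i < l.length then l.get ⟨i, h⟩ else x (i - l.length)

/-- A cycle: a nonempty finite path with equal range and source. -/
def IsCycle (c : List G.E) : Prop := c ≠ [] ∧ ∃ u, G.IsPath u c u

/-- A finite path contains a cycle if some (contiguous) subpath is a cycle. -/
def ContainsCycle (l : List G.E) : Prop :=
  ∃ p c q, l = p ++ c ++ q ∧ G.IsCycle c

/-- A simple cycle: a cycle containing no other cycle as a proper subpath. -/
def IsSimpleCycle (c : List G.E) : Prop :=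
  G.IsCycle c ∧ ∀ p c' q, c = p ++ c' ++ q → G.IsCycle c' → c' = c

/-- A pair of finite paths is minimal if no nontrivial common final segment
can be factored out. -/
def Minimal (a b : List G.E) : Prop :=
  ∀ a' b' n, a = a' ++ n → b = b' ++ n → n = []

/-- No cycle of `G` has an entrance: for every edge `f` on a cycle, `f` is the
only edge with range `r f`. -/
def NoCycleHasEntrance : Prop :=
  ∀ u c, G.IsCycle c → G.IsPath u c u → ∀ f ∈ c, ∀ e, G.r e = G.r f → e = f

/-- Row-finite: every vertex receives only finitely many edges. -/
def RowFinite : Prop := ∀ v, {e : G.E | G.r e = v}.Finite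

/-- No sources: every vertex receives an edge. -/
def NoSources : Prop := ∀ v : G.V, ∃ e, G.r e = v

/-- Minimal cycle-free ancestry pair for the vertices `v, w`. -/
def MCFPair (v w : G.V) (a b : List G.E) : Prop :=
  (∃ u, G.IsPath v a u ∧ G.IsPath w b u) ∧ G.Minimal a b ∧
    ¬G.ContainsCycle a ∧ ¬G.ContainsCycle b

end DirGraph

/-- The image `π_R(Z(a,b))` in `E^∞ × E^∞` of the cylinder set of an ancestry
pair `(a,b)` for the vertices `v, w`. -/
def DirGraph.PairSet (G : DirGraph) (v w : G.V) (a b : List G.E) :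
    Set ((ℕ → G.E) × (ℕ → G.E)) :=
  {t | ∃ (u : G.V) (z : ℕ → G.E), G.InfPath z ∧ G.r (z 0) = u ∧
    G.IsPath v a u ∧ G.IsPath w b u ∧ t = (G.prepend a z, G.prepend b z)}

namespace DirGraph

variable {G : DirGraph}

theorem isPath_rng {v u : G.V} {e : G.E} {l : List G.E}
    (h : G.IsPath v (e :: l) u) : v = G.r e := by cases h; rfl

theorem isPath_cons_inv {v u : G.V} {e : G.E} {l : List G.E}
    (h : G.IsPath v (e :: l) u) : G.IsPath (G.s e) l u := by
  cases h; assumption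

theorem isPath_src_unique {v u u' : G.V} {l : List G.E}
    (h : G.IsPath v l u) (h' : G.IsPath v l u') : u = u' := by
  induction l generalizing v with
  | nil => cases h; cases h'; rfl
  | cons e l ih => exact ih (isPath_cons_inv h) (isPath_cons_inv h')

theorem isPath_append {v u : G.V} {a b : List G.E} :
    G.IsPath v (a ++ b) u ↔ ∃ t, G.IsPath v a t ∧ G.IsPath t b u := by
  induction a generalizing v with
  | nil =>
    constructor
    · exact fun h => ⟨v, .nil v, h⟩
    · rintro ⟨t, ht, hb⟩; cases ht; exact hb
  | cons e a ih =>
    constructor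
    · intro h
      rw [List.cons_append] at h
      have hv : v = G.r e := isPath_rng h
      obtain ⟨t, h1, h2⟩ := ih.mp (isPath_cons_inv h)
      exact ⟨t, hv ▸ IsPath.cons e h1, h2⟩
    · rintro ⟨t, ht, hb⟩
      have hv : v = G.r e := isPath_rng ht
      have := IsPath.cons e (ih.mpr ⟨t, isPath_cons_inv ht, hb⟩)
      rw [List.cons_append]
      exact hv ▸ this

theorem prepend_nil (x : ℕ → G.E) : G.prepend [] x = x := by
  funext i; simp [prepend]

theorem prepend_cons_zero (e : G.E) (l : List G.E) (x : ℕ → G.E) :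
    G.prepend (e :: l) x 0 = e := by simp [prepend]

theorem prepend_cons_succ (e : G.E) (l : List G.E) (x : ℕ → G.E) (i : ℕ) :
    G.prepend (e :: l) x (i + 1) = G.prepend l x i := by
  by_cases h : i < l.length
  · simp [prepend, h, Nat.succ_lt_succ h]
  · have h' : ¬ (i + 1 < (e :: l).length) := by simp; omega
    simp only [prepend, dif_neg h, dif_neg h']
    congr 1
    simp only [List.length_cons]
    omega

theorem prepend_append (a b : List G.E) (x : ℕ → G.E) :
    G.prepend (a ++ b) x = G.prepend a (G.prepend b x) := by
  induction a with
  | nil => simp [prepend_nil]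
  | cons e a ih =>
    funext i
    cases i with
    | zero => simp only [List.cons_append, prepend_cons_zero]
    | succ i => simp only [List.cons_append, prepend_cons_succ, ih]

theorem prepend_infPath {t u : G.V} {l : List G.E} {x : ℕ → G.E}
    (h : G.IsPath t l u) (hx : G.InfPath x) (hr : G.r (x 0) = u) :
    G.InfPath (G.prepend l x) ∧ G.r (G.prepend l x 0) = t := by
  induction l generalizing t with
  | nil => cases h; rw [prepend_nil]; exact ⟨hx, hr⟩
  | cons e l ih =>
    cases h with
    | cons e h =>
      obtain ⟨h1, h2⟩ := ih h
      refine ⟨fun i => ?_, by rw [prepend_cons_zero]⟩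
      cases i with
      | zero => rw [prepend_cons_zero, prepend_cons_succ]; exact h2.symm
      | succ i => rw [prepend_cons_succ, prepend_cons_succ]; exact h1 i

theorem isPath_nil_inv {v u : G.V} (h : G.IsPath v [] u) : v = u := by
  cases h; rfl

theorem rng_unique {v v' u u' : G.V} {l : List G.E} (h : G.IsPath v l u)
    (h' : G.IsPath v' l u') (hne : l ≠ []) : v = v' := by
  cases l with
  | nil => exact absurd rfl hne
  | cons e l => rw [isPath_rng h, isPath_rng h']

def OnCyc (G : DirGraph) (c : List G.E) (t : G.V) : Prop :=
  ∃ f, f ∈ c ∧ G.r f = t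

theorem oncyc_base {c : List G.E} {u₁ : G.V} (hcc : G.IsPath u₁ c u₁)
    (hne : c ≠ []) : OnCyc G c u₁ := by
  cases c with
  | nil => exact absurd rfl hne
  | cons e l => exact ⟨e, List.mem_cons_self, (isPath_rng hcc).symm⟩

theorem eq_of_oncyc (hnc : G.NoCycleHasEntrance) {c : List G.E} {u₁ : G.V}
    (hcc : G.IsPath u₁ c u₁) (hne : c ≠ []) {t : G.V} (h : OnCyc G c t)
    {e e' : G.E} (he : G.r e = t) (he' : G.r e' = t) : e = e' := by
  obtain ⟨f, hf, hrf⟩ := h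
  have h1 := hnc u₁ c ⟨hne, u₁, hcc⟩ hcc f hf e (by rw [he, hrf])
  have h2 := hnc u₁ c ⟨hne, u₁, hcc⟩ hcc f hf e' (by rw [he', hrf])
  rw [h1, h2]

theorem oncyc_src_aux {c : List G.E} {u₁ : G.V} (hcc : G.IsPath u₁ c u₁) :
    ∀ (l : List G.E) (t : G.V), G.IsPath t l u₁ → (∀ f ∈ l, f ∈ c) →
      ∀ f ∈ l, OnCyc G c (G.s f) := by
  intro l
  induction l with
  | nil => intro t _ _ f hf; exact absurd hf List.not_mem_nil
  | cons e l ih =>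
    intro t h hsub f hf
    rcases List.mem_cons.mp hf with rfl | hf'
    · cases l with
      | nil =>
        have h' : G.s f = u₁ := isPath_nil_inv (isPath_cons_inv h)
        rw [h']
        exact oncyc_base hcc (List.ne_nil_of_mem (hsub f List.mem_cons_self))
      | cons e' l' =>
        have h' := isPath_cons_inv h
        exact ⟨e', hsub e' (List.mem_cons_of_mem _ List.mem_cons_self),
          (isPath_rng h').symm⟩
    · exact ih (G.s e) (isPath_cons_inv h) (fun g hg => hsub g (List.mem_cons_of_mem _ hg)) f hf'

theorem oncyc_src {c : List G.E} {u₁ : G.V} (hcc : G.IsPath u₁ c u₁)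
    {f : G.E} (hf : f ∈ c) : OnCyc G c (G.s f) :=
  oncyc_src_aux hcc c u₁ hcc (fun _ hg => hg) f hf

theorem path_from_oncyc (hnc : G.NoCycleHasEntrance) {c : List G.E} {u₁ : G.V}
    (hcc : G.IsPath u₁ c u₁) (hne : c ≠ []) {t u₂ : G.V} {l : List G.E}
    (h : G.IsPath t l u₂) (ht : OnCyc G c t) :
    (∀ f ∈ l, f ∈ c) ∧ OnCyc G c u₂ := by
  induction l generalizing t with
  | nil => cases h; exact ⟨fun f hf => absurd hf List.not_mem_nil, ht⟩
  | cons e l ih =>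
    have hv : G.r e = t := (isPath_rng h).symm
    obtain ⟨f, hf, hrf⟩ := ht
    have hef : e = f := eq_of_oncyc hnc hcc hne ⟨f, hf, hrf⟩ hv hrf
    have hec : e ∈ c := hef ▸ hf
    have hsrc : OnCyc G c (G.s e) := oncyc_src hcc hec
    obtain ⟨h1, h2⟩ := ih (isPath_cons_inv h) hsrc
    refine ⟨fun g hg => ?_, h2⟩
    rcases List.mem_cons.mp hg with rfl | hg'
    · exact hec
    · exact h1 g hg'

theorem inf_unique (hnc : G.NoCycleHasEntrance) {c : List G.E} {u₁ : G.V}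
    (hcc : G.IsPath u₁ c u₁) (hne : c ≠ []) {t : G.V} (ht : OnCyc G c t)
    {z z' : ℕ → G.E} (hz : G.InfPath z) (hz' : G.InfPath z')
    (h0 : G.r (z 0) = t) (h0' : G.r (z' 0) = t) : z = z' := by
  have key : ∀ i, z i = z' i ∧ OnCyc G c (G.s (z i)) := by
    intro i
    induction i with
    | zero =>
      refine ⟨eq_of_oncyc hnc hcc hne ht h0 h0', ?_⟩
      obtain ⟨f, hf, hrf⟩ := ht
      have : z 0 = f := eq_of_oncyc hnc hcc hne ⟨f, hf, hrf⟩ h0 hrf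
      exact this ▸ oncyc_src hcc hf
    | succ i ih =>
      have hr1 : G.r (z (i+1)) = G.s (z i) := (hz i).symm
      have hr2 : G.r (z' (i+1)) = G.s (z i) := by rw [ih.1]; exact (hz' i).symm
      refine ⟨eq_of_oncyc hnc hcc hne ih.2 hr1 hr2, ?_⟩
      obtain ⟨f, hf, hrf⟩ := ih.2
      have : z (i+1) = f := eq_of_oncyc hnc hcc hne ⟨f, hf, hrf⟩ hr1 hrf
      exact this ▸ oncyc_src hcc hf
  funext i
  exact (key i).1

theorem exists_inf {c : List G.E} {u₁ : G.V} (hcc : G.IsPath u₁ c u₁)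
    {t : G.V} (ht : OnCyc G c t) : ∃ ζ : ℕ → G.E, G.InfPath ζ ∧ G.r (ζ 0) = t := by
  classical
  have hF : ∀ p : {t : G.V // OnCyc G c t}, ∃ f, f ∈ c ∧ G.r f = p.1 := fun p => p.2
  choose F hFc hFr using hF
  have hS : ∀ p, OnCyc G c (G.s (F p)) := fun p => oncyc_src hcc (hFc p)
  let T : ℕ → {t : G.V // OnCyc G c t} := fun n =>
    Nat.rec ⟨t, ht⟩ (fun _ p => ⟨G.s (F p), hS p⟩) n
  have hT : ∀ n, (T (n+1)).1 = G.s (F (T n)) := fun n => rfl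
  exact ⟨fun n => F (T n), fun i => by rw [hFr (T (i+1)), hT], hFr (T 0)⟩

theorem return_path {c : List G.E} {u₁ : G.V} (hcc : G.IsPath u₁ c u₁)
    {g : G.E} (hg : g ∈ c) : ∃ ρ, G.IsPath (G.r g) ρ u₁ := by
  obtain ⟨l₁, l₂, hc⟩ := List.append_of_mem hg
  rw [hc] at hcc
  obtain ⟨t', h1, h2⟩ := isPath_append.mp hcc
  have ht' : t' = G.r g := isPath_rng h2
  exact ⟨g :: l₂, ht' ▸ h2⟩

theorem path_shorten {t u₂ : G.V} {x y cc : List G.E}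
    (hp : G.IsPath t (x ++ cc ++ y) u₂) (hcy : G.IsCycle cc) :
    G.IsPath t (x ++ y) u₂ := by
  obtain ⟨hne', b, hb⟩ := hcy
  rw [List.append_assoc] at hp
  obtain ⟨m1, hx, hrest⟩ := isPath_append.mp hp
  obtain ⟨m2, hc', hy⟩ := isPath_append.mp hrest
  have hm1 : m1 = b := rng_unique hc' hb hne'
  have hm2 : m2 = b := isPath_src_unique (hm1 ▸ hc' : G.IsPath b cc m2) hb
  exact isPath_append.mpr ⟨m1, hx, (hm2.trans hm1.symm) ▸ hy⟩

theorem cyc_hit (hnc : G.NoCycleHasEntrance) {c : List G.E} {u₁ : G.V}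
    (hcc : G.IsPath u₁ c u₁) (hne : c ≠ []) {w₀ t₀ : G.V} {δ p cc q : List G.E}
    (hδ : G.IsPath w₀ δ t₀) (hsplit : δ = p ++ cc ++ q) (hcy : G.IsCycle cc)
    (ht : OnCyc G c t₀) : ∃ bc, G.IsPath w₀ p bc ∧ OnCyc G c bc := by
  obtain ⟨hne', b, hb⟩ := hcy
  rw [hsplit, List.append_assoc] at hδ
  obtain ⟨m1, hp, hrest⟩ := isPath_append.mp hδ
  obtain ⟨m2, hc', hq⟩ := isPath_append.mp hrest
  have hm1 : m1 = b := rng_unique hc' hb hne'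
  have hm2 : m2 = b := isPath_src_unique (hm1 ▸ hc' : G.IsPath b cc m2) hb
  have hq' : G.IsPath b q t₀ := hm2 ▸ hq
  have hbb : OnCyc G cc b := oncyc_base hb hne'
  have ht' : OnCyc G cc t₀ := (path_from_oncyc hnc hb hne' hq' hbb).2
  obtain ⟨g, hg, hrg⟩ := ht'
  obtain ⟨ρ', hρ'⟩ := return_path hb hg
  have hP : G.IsPath t₀ (ρ' ++ cc) b := isPath_append.mpr ⟨b, hrg ▸ hρ', hb⟩
  have hall := (path_from_oncyc hnc hcc hne hP ht).1
  cases cc with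
  | nil => exact absurd rfl hne'
  | cons e cc' =>
    refine ⟨b, hm1 ▸ hp, e, hall e (List.mem_append_right _ List.mem_cons_self), ?_⟩
    exact (isPath_rng hb).symm
theorem core_base (hnc : G.NoCycleHasEntrance) {c : List G.E} {u₁ : G.V}
    (hcc : G.IsPath u₁ c u₁) (hne : c ≠ []) {δ : List G.E} {w₀ t₀ : G.V}
    (hδ : G.IsPath w₀ δ t₀) (ht : OnCyc G c t₀)
    (hnoS : ∀ j tj, j < δ.length → G.IsPath w₀ (List.take j δ) tj → ¬ OnCyc G c tj) :
    ∃ l, G.IsPath w₀ l u₁ ∧ ¬G.ContainsCycle l ∧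
      ∀ z Z, G.InfPath z → G.InfPath Z → G.r (z 0) = t₀ → G.r (Z 0) = u₁ →
        G.prepend δ z = G.prepend l Z := by
  classical
  have hfree : ¬ G.ContainsCycle δ := by
    rintro ⟨p, cc, q, hsp, hcy⟩
    obtain ⟨bc, hp, hbc⟩ := cyc_hit hnc hcc hne hδ hsp hcy ht
    have hccne : cc ≠ [] := hcy.1
    have hlen : p.length < δ.length := by
      rw [hsp]; simp only [List.length_append]
      have : cc.length ≠ 0 := fun h0 => hccne (List.length_eq_zero_iff.mp h0)
      omega
    have htake : List.take p.length δ = p := by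
      rw [hsp, List.append_assoc, List.take_left]
    have hp' : G.IsPath w₀ (List.take p.length δ) bc := by rw [htake]; exact hp
    exact hnoS p.length bc hlen hp' hbc
  have hex : ∃ k, ∃ ρ : List G.E, ρ.length = k ∧ G.IsPath t₀ ρ u₁ := by
    obtain ⟨g, hg, hrg⟩ := ht
    obtain ⟨ρ, hρ⟩ := return_path hcc hg
    exact ⟨ρ.length, ρ, rfl, hrg ▸ hρ⟩
  obtain ⟨ρ, hρlen, hρ⟩ := Nat.find_spec hex
  have hρmin : ∀ ρ' : List G.E, G.IsPath t₀ ρ' u₁ → ¬ ρ'.length < ρ.length :=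
    fun ρ' h' hlt => Nat.find_min hex (hρlen ▸ hlt) ⟨ρ', rfl, h'⟩
  have hρfree : ¬ G.ContainsCycle ρ := by
    rintro ⟨x, cc, y, hsp, hcy⟩
    refine hρmin _ (path_shorten (hsp ▸ hρ) hcy) ?_
    rw [hsp]
    simp only [List.length_append]
    have : cc.length ≠ 0 := fun h0 => hcy.1 (List.length_eq_zero_iff.mp h0)
    omega
  refine ⟨δ ++ ρ, isPath_append.mpr ⟨t₀, hδ, hρ⟩, ?_, ?_⟩
  · rintro ⟨a, cc, b, hsp, hcy⟩
    rw [List.append_assoc] at hsp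
    rcases List.append_eq_append_iff.mp hsp with ⟨a', ha', hρ'⟩ | ⟨c', hδ', hccb⟩
    · exact hρfree ⟨a', cc, b, by rw [hρ', List.append_assoc], hcy⟩
    · rcases List.append_eq_append_iff.mp hccb with ⟨x, hc'x, hbx⟩ | ⟨y, hccy, hρy⟩
      · exact hfree ⟨a, cc, x, by rw [hδ', hc'x, List.append_assoc], hcy⟩
      · by_cases hc' : c' = []
        · subst hc'
          simp only [List.nil_append] at hccy
          exact hρfree ⟨[], cc, b, by rw [hρy, hccy]; simp, hcy⟩
        · obtain ⟨hccne, bc, hbcpath⟩ := hcy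
          obtain ⟨s₁, ha, hc'path⟩ := isPath_append.mp (hδ' ▸ hδ)
          rw [hccy] at hbcpath
          obtain ⟨m, hbc1, hy1⟩ := isPath_append.mp hbcpath
          have hbs : bc = s₁ := rng_unique hbc1 hc'path hc'
          have hmt : m = t₀ := isPath_src_unique (hbs ▸ hbc1 : G.IsPath s₁ c' m) hc'path
          have hyb : G.IsPath t₀ y bc := hmt ▸ hy1
          have hbcS : OnCyc G c bc := (path_from_oncyc hnc hcc hne hyb ht).2
          have hlen : a.length < δ.length := by
            rw [hδ', List.length_append]
            have : c'.length ≠ 0 := fun h0 => hc' (List.length_eq_zero_iff.mp h0)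
            omega
          have htake : List.take a.length δ = a := by rw [hδ', List.take_left]
          have ha' : G.IsPath w₀ (List.take a.length δ) bc := by
            rw [htake, hbs]; exact ha
          exact hnoS a.length bc hlen ha' hbcS
  · intro z Z hz hZ hz0 hZ0
    obtain ⟨hPZ1, hPZ2⟩ := prepend_infPath hρ hZ hZ0
    have hzeq : z = G.prepend ρ Z := inf_unique hnc hcc hne ht hz hPZ1 hz0 hPZ2
    rw [prepend_append, ← hzeq]

theorem core (hnc : G.NoCycleHasEntrance) {c : List G.E} {u₁ : G.V}
    (hcc : G.IsPath u₁ c u₁) (hne : c ≠ []) :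
    ∀ (N : ℕ) (δ : List G.E) (w₀ t₀ : G.V), δ.length ≤ N →
      G.IsPath w₀ δ t₀ → OnCyc G c t₀ →
      ∃ l, G.IsPath w₀ l u₁ ∧ ¬G.ContainsCycle l ∧
        ∀ z Z, G.InfPath z → G.InfPath Z → G.r (z 0) = t₀ → G.r (Z 0) = u₁ →
          G.prepend δ z = G.prepend l Z := by
  intro N
  induction N with
  | zero =>
    intro δ w₀ t₀ hlen hδ ht
    exact core_base hnc hcc hne hδ ht (fun j tj hj _ _ => by omega)
  | succ N ih =>
    intro δ w₀ t₀ hlen hδ ht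
    by_cases h : ∃ j tj, j < δ.length ∧ G.IsPath w₀ (List.take j δ) tj ∧ OnCyc G c tj
    · obtain ⟨j, tj, hj, htake, htj⟩ := h
      have hsp : δ = List.take j δ ++ List.drop j δ := (List.take_append_drop j δ).symm
      obtain ⟨t', h1, h2⟩ := isPath_append.mp (hsp ▸ hδ)
      have ht' : t' = tj := isPath_src_unique h1 htake
      obtain ⟨l, hl, hlf, hspec⟩ := ih (List.take j δ) w₀ tj
        (by rw [List.length_take]; omega) htake htj
      refine ⟨l, hl, hlf, ?_⟩
      intro z Z hz hZ hz0 hZ0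
      have hdrop : G.IsPath tj (List.drop j δ) t₀ := ht' ▸ h2
      obtain ⟨hPD1, hPD2⟩ := prepend_infPath hdrop hz hz0
      have hrec := hspec (G.prepend (List.drop j δ) z) Z hPD1 hZ hPD2 hZ0
      calc G.prepend δ z
          = G.prepend (List.take j δ ++ List.drop j δ) z := by rw [← hsp]
        _ = G.prepend (List.take j δ) (G.prepend (List.drop j δ) z) := prepend_append _ _ _
        _ = G.prepend l Z := hrec
    · push_neg at h
      exact core_base hnc hcc hne hδ ht (fun j tj hj hp => h j tj hj hp)

theorem strip {v w : G.V} (X Y : ℕ → G.E) :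
    ∀ (N : ℕ) (l m : List G.E) (u'' : G.V), l.length ≤ N →
      G.IsPath v l u'' → G.IsPath w m u'' → ¬G.ContainsCycle l → ¬G.ContainsCycle m →
      (∃ ζ, G.InfPath ζ ∧ G.r (ζ 0) = u'' ∧ X = G.prepend l ζ ∧ Y = G.prepend m ζ) →
      ∃ l' m' u', G.IsPath v l' u' ∧ G.IsPath w m' u' ∧ G.Minimal l' m' ∧
        ¬G.ContainsCycle l' ∧ ¬G.ContainsCycle m' ∧
        ∃ ζ, G.InfPath ζ ∧ G.r (ζ 0) = u' ∧ X = G.prepend l' ζ ∧ Y = G.prepend m' ζ := by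
  intro N
  induction N with
  | zero =>
    intro l m u'' hlen hl hm hlf hmf hζ
    by_cases hM : G.Minimal l m
    · exact ⟨l, m, u'', hl, hm, hM, hlf, hmf, hζ⟩
    · exfalso
      unfold DirGraph.Minimal at hM
      push_neg at hM
      obtain ⟨a, b, n, hla, _, hn⟩ := hM
      have : n.length ≠ 0 := fun h0 => hn (List.length_eq_zero_iff.mp h0)
      have := congrArg List.length hla
      simp only [List.length_append] at this
      omega
  | succ N ih =>
    intro l m u'' hlen hl hm hlf hmf hζ
    by_cases hM : G.Minimal l m
    · exact ⟨l, m, u'', hl, hm, hM, hlf, hmf, hζ⟩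
    · unfold DirGraph.Minimal at hM
      push_neg at hM
      obtain ⟨a, b, n, hla, hmb, hn⟩ := hM
      obtain ⟨ta, hva, hna⟩ := isPath_append.mp (hla ▸ hl)
      obtain ⟨tb, hwb, hnb⟩ := isPath_append.mp (hmb ▸ hm)
      have htab : ta = tb := rng_unique hna hnb hn
      obtain ⟨ζ, hζi, hζ0, hX, hY⟩ := hζ
      obtain ⟨hP1, hP2⟩ := prepend_infPath hna hζi hζ0
      have haf : ¬G.ContainsCycle a := by
        rintro ⟨p, cc, q, hsp, hcy⟩
        exact hlf ⟨p, cc, q ++ n, by rw [hla, hsp]; simp [List.append_assoc], hcy⟩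
      have hbf : ¬G.ContainsCycle b := by
        rintro ⟨p, cc, q, hsp, hcy⟩
        exact hmf ⟨p, cc, q ++ n, by rw [hmb, hsp]; simp [List.append_assoc], hcy⟩
      have hlena : a.length ≤ N := by
        have : n.length ≠ 0 := fun h0 => hn (List.length_eq_zero_iff.mp h0)
        have := congrArg List.length hla
        simp only [List.length_append] at this
        omega
      refine ih a b ta hlena hva (htab ▸ hwb) haf hbf
        ⟨G.prepend n ζ, hP1, hP2, ?_, ?_⟩
      · rw [hX, hla, prepend_append]
      · rw [hY, hmb, prepend_append]
theorem cycle_reaches (hnc : G.NoCycleHasEntrance) {w₀ t₀ : G.V} {δ : List G.E}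
    (hδ : G.IsPath w₀ δ t₀) (hcd : G.ContainsCycle δ) :
    ∃ (c : List G.E) (u₁ : G.V), G.IsPath u₁ c u₁ ∧ c ≠ [] ∧ OnCyc G c t₀ := by
  obtain ⟨p, c, q, hsp, hcy⟩ := hcd
  obtain ⟨hne, u₁, hcc⟩ := hcy
  rw [hsp, List.append_assoc] at hδ
  obtain ⟨m1, hp, hrest⟩ := isPath_append.mp hδ
  obtain ⟨m2, hc, hq⟩ := isPath_append.mp hrest
  have hm1 : m1 = u₁ := rng_unique hc hcc hne
  have hm2 : m2 = u₁ := isPath_src_unique (hm1 ▸ hc : G.IsPath u₁ c m2) hcc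
  have hq' : G.IsPath u₁ q t₀ := hm2 ▸ hq
  exact ⟨c, u₁, hcc, hne, (path_from_oncyc hnc hcc hne hq' (oncyc_base hcc hne)).2⟩

end DirGraph

/-- In a row-finite graph with no sources in which no cycle has an
entrance, for any ancestry pair `(α,β)` with `α` or `β` containing a cycle,
there is a cycle-free minimal ancestry pair `(λ,μ)` with
`π_R(Z(α,β)) ⊆ π_R(Z(λ,μ))`. -/
theorem pairset_contained_in_cycle_free_pairset (G : DirGraph)
    (hrf : G.RowFinite) (hns : G.NoSources) (hnc : G.NoCycleHasEntrance)
    (v w u : G.V) (α β : List G.E)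
    (hα : G.IsPath v α u) (hβ : G.IsPath w β u)
    (hcyc : G.ContainsCycle α ∨ G.ContainsCycle β) :
    ∃ (l m : List G.E) (u' : G.V), G.IsPath v l u' ∧ G.IsPath w m u' ∧
      G.Minimal l m ∧ ¬G.ContainsCycle l ∧ ¬G.ContainsCycle m ∧
      G.PairSet v w α β ⊆ G.PairSet v w l m := by
  obtain ⟨c, u₁, hcc, hne, hSu⟩ :
      ∃ (c : List G.E) (u₁ : G.V), G.IsPath u₁ c u₁ ∧ c ≠ [] ∧ DirGraph.OnCyc G c u := by
    rcases hcyc with hca | hcb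
    · exact DirGraph.cycle_reaches hnc hα hca
    · exact DirGraph.cycle_reaches hnc hβ hcb
  obtain ⟨ζ₁, hζ₁, hζ₁0⟩ := DirGraph.exists_inf hcc (DirGraph.oncyc_base hcc hne)
  obtain ⟨l₀, hl₀, hl₀f, hspecα⟩ :=
    DirGraph.core hnc hcc hne α.length α v u le_rfl hα hSu
  obtain ⟨m₀, hm₀, hm₀f, hspecβ⟩ :=
    DirGraph.core hnc hcc hne β.length β w u le_rfl hβ hSu
  obtain ⟨l, m, u', hl, hm, hMin, hlf, hmf, ζ, hζ, hζ0, hX, hY⟩ :=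
    DirGraph.strip (G.prepend l₀ ζ₁) (G.prepend m₀ ζ₁) l₀.length l₀ m₀ u₁ le_rfl
      hl₀ hm₀ hl₀f hm₀f ⟨ζ₁, hζ₁, hζ₁0, rfl, rfl⟩
  refine ⟨l, m, u', hl, hm, hMin, hlf, hmf, ?_⟩
  rintro ⟨x, y⟩ ⟨u₀, z, hz, hz0, hαp, hβp, ht⟩
  have hu : u₀ = u := DirGraph.isPath_src_unique hαp hα
  rw [hu] at hz0
  have e1 : G.prepend α z = G.prepend l₀ ζ₁ := hspecα z ζ₁ hz hζ₁ hz0 hζ₁0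
  have e2 : G.prepend β z = G.prepend m₀ ζ₁ := hspecβ z ζ₁ hz hζ₁ hz0 hζ₁0
  refine ⟨u', ζ, hζ, hζ0, hl, hm, ?_⟩
  rw [ht, e1, e2, hX, hY]
end

section
/- For a directed graph E (a 1-graph viewed as a 1-graph), E is tight if and only if no cycle of E has an entrance. -/
/-- A (row-finite, no-sources) graph is tight if every isotropy element
`(x, p - q, x)` of the path groupoid lies in a basic set `Z(α,β)` such that
`αy = βy` for every infinite path `y` with range `s(α)`. -/
def DirGraph.Tight (G : DirGraph) : Prop :=
  ∀ x : ℕ → G.E, G.InfPath x → ∀ p q : ℕ, shift p x = shift q x →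
    ∃ (a b : List G.E) (v u : G.V), G.IsPath v a u ∧ G.IsPath v b u ∧
      G.r (x 0) = v ∧
      (∀ i (h : i < a.length), x i = a.get ⟨i, h⟩) ∧
      shift a.length x = shift b.length x ∧
      (a.length : ℤ) - (b.length : ℤ) = (p : ℤ) - (q : ℤ) ∧
      (∀ y : ℕ → G.E, G.InfPath y → G.r (y 0) = u →
        G.prepend a y = G.prepend b y)

namespace DirGraph

variable {G : DirGraph}

lemma isPath_append_s13 {v w u : G.V} {l1 l2 : List G.E}
    (h1 : G.IsPath v l1 w) (h2 : G.IsPath w l2 u) : G.IsPath v (l1 ++ l2) u := by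
  induction h1 with
  | nil _ => exact h2
  | cons e _ ih => exact IsPath.cons e (ih h2)

lemma isPath_append_split : ∀ (l1 : List G.E) {v u : G.V} {l2 : List G.E},
    G.IsPath v (l1 ++ l2) u → ∃ w, G.IsPath v l1 w ∧ G.IsPath w l2 u := by
  intro l1
  induction l1 with
  | nil => exact fun h => ⟨_, .nil _, h⟩
  | cons e t ih =>
    intro v u l2 h
    cases h with
    | cons _ hp =>
      obtain ⟨w, h1, h2⟩ := ih hp
      exact ⟨w, .cons e h1, h2⟩

lemma isPath_nil_eq {v u : G.V} (hp : G.IsPath v [] u) : u = v := by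
  cases hp; rfl

lemma isPath_r_head {v u : G.V} {l : List G.E} (hp : G.IsPath v l u)
    (h : 0 < l.length) : v = G.r (l.get ⟨0, h⟩) := by
  cases hp with
  | nil => simp at h
  | cons e _ => rfl

lemma isPath_get_s : ∀ {l : List G.E} {v u : G.V}, G.IsPath v l u →
    ∀ i (h : i < l.length),
      G.s (l.get ⟨i, h⟩) =
        if h2 : i + 1 < l.length then G.r (l.get ⟨i + 1, h2⟩) else u := by
  intro l
  induction l with
  | nil => intro v u _ i h; simp at h
  | cons e t ih =>
    intro v u hp i h
    cases hp with
    | cons _ hp =>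
      cases i with
      | zero =>
        by_cases h2 : (0:ℕ) + 1 < (e :: t).length
        · rw [dif_pos h2]
          have ht : 0 < t.length := by simpa using h2
          have := isPath_r_head hp ht
          simpa using this
        · rw [dif_neg h2]
          have ht : t = [] := by
            cases t with
            | nil => rfl
            | cons a b => simp at h2
          subst ht
          rw [isPath_nil_eq hp]
          rfl
      | succ i =>
        have hi : i < t.length := by simpa using h
        have := ih hp i hi
        have hget : (e :: t).get ⟨i + 1, h⟩ = t.get ⟨i, hi⟩ := rfl
        rw [hget, this]
        by_cases h2 : i + 1 < t.length
        · rw [dif_pos h2, dif_pos (by simpa using Nat.succ_lt_succ h2)]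
          rfl
        · rw [dif_neg h2, dif_neg (by simp only [List.length_cons]; omega)]

/-- The terminal vertex of a finite path that is an initial segment of an
infinite path. -/
lemma isPath_end_eq : ∀ {l : List G.E} {x : ℕ → G.E} {v u : G.V},
    G.InfPath x → G.IsPath v l u → v = G.r (x 0) →
    (∀ i (h : i < l.length), l.get ⟨i, h⟩ = x i) → u = G.r (x l.length) := by
  intro l
  induction l with
  | nil =>
    intro x v u _ hp hv _
    cases hp
    exact hv
  | cons e t ih =>
    intro x v u hx hp hv hget
    cases hp with
    | cons _ hp =>
      have he : e = x 0 := hget 0 (by simp)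
      have h1 : G.s e = G.r ((shift 1 x) 0) := by
        rw [he]; exact hx 0
      have hx1 : G.InfPath (shift 1 x) := fun i => hx (i + 1)
      have hg1 : ∀ i (h : i < t.length), t.get ⟨i, h⟩ = (shift 1 x) i := by
        intro i hi
        have := hget (i + 1) (by simpa using Nat.succ_lt_succ hi)
        exact this
      have := ih hx1 hp h1 hg1
      simpa [shift, Nat.add_comm] using this

/-- Any vertex of a graph without sources receives an infinite path. -/
lemma exists_infPath (hns : G.NoSources) (v : G.V) :
    ∃ z : ℕ → G.E, G.InfPath z ∧ G.r (z 0) = v := by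
  choose f hf using hns
  let w : ℕ → G.V := fun k => Nat.rec v (fun _ pv => G.s (f pv)) k
  refine ⟨fun k => f (w k), fun i => ?_, hf v⟩
  show G.s (f (w i)) = G.r (f (w (i + 1)))
  rw [hf]

/-- Prepending a finite path to a compatible infinite path gives an infinite
path. -/
lemma infPath_prepend {l : List G.E} {v u : G.V} {z : ℕ → G.E}
    (hl : G.IsPath v l u) (hz : G.InfPath z) (hz0 : G.r (z 0) = u) :
    G.InfPath (G.prepend l z) := by
  intro i
  unfold prepend
  by_cases h : i < l.length
  · rw [dif_pos h]
    by_cases h2 : i + 1 < l.length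
    · rw [dif_pos h2]
      rw [isPath_get_s hl i h, dif_pos h2]
    · rw [dif_neg h2]
      have : i + 1 - l.length = 0 := by omega
      rw [this, hz0]
      rw [isPath_get_s hl i h, dif_neg h2]
  · rw [dif_neg h, dif_neg (by omega)]
    have h1 : i + 1 - l.length = (i - l.length) + 1 := by omega
    rw [h1]
    exact hz _

/-- Prefixes of infinite paths are finite paths. -/
lemma isPath_ofFn {x : ℕ → G.E} (hx : G.InfPath x) :
    ∀ (n q : ℕ), G.IsPath (G.r (x q)) (List.ofFn fun k : Fin n => x (q + k))
      (G.r (x (q + n))) := by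
  intro n
  induction n with
  | zero => intro q; simpa using IsPath.nil (G.r (x q))
  | succ n ih =>
    intro q
    rw [List.ofFn_succ]
    simp only [Fin.val_zero, Nat.add_zero, Fin.val_succ]
    have h1 : (List.ofFn fun k : Fin n => x (q + (k + 1))) =
        (List.ofFn fun k : Fin n => x ((q + 1) + k)) := by
      congr 1; funext k; congr 1; omega
    rw [h1]
    have hih := ih (q + 1)
    rw [← hx q] at hih
    have := IsPath.cons (G := G) (x q) hih
    have h2 : q + 1 + n = q + (n + 1) := by omega
    rwa [h2] at this

end DirGraph
namespace DirGraph

variable {G : DirGraph}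

lemma get_congr {α : Type} {l : List α} {i j : ℕ} (h : i = j)
    (hi : i < l.length) (hj : j < l.length) : l.get ⟨i, hi⟩ = l.get ⟨j, hj⟩ := by
  subst h; rfl

/-- Key technical lemma for the "no entrance → tight" direction: if no cycle
has an entrance and `x` is eventually periodic, then the continuation of any
path entering the cycle is forced. -/
lemma key (hn : G.NoCycleHasEntrance) {x : ℕ → G.E} (hx : G.InfPath x)
    {p q : ℕ} (hle : q ≤ p) (hs : shift p x = shift q x) :
    ∀ y : ℕ → G.E, G.InfPath y → G.r (y 0) = G.r (x q) →
      G.prepend (List.ofFn fun k : Fin p => x k) y =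
      G.prepend (List.ofFn fun k : Fin q => x k) y := by
  rcases eq_or_lt_of_le hle with heq | hlt
  · subst heq; intro y _ _; rfl
  · intro y hy hy0
    set d := p - q with hd
    have hd0 : 0 < d := by omega
    have hper : ∀ m, q ≤ m → x (m + d) = x m := by
      intro m hm
      have := congrFun hs (m - q)
      simp only [shift] at this
      have h1 : m - q + p = m + d := by omega
      have h2 : m - q + q = m := by omega
      rwa [h1, h2] at this
    have hmod : ∀ j, x (q + j) = x (q + j % d) := by
      intro j
      induction j using Nat.strong_induction_on with
      | _ j ih =>
        by_cases hj : j < d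
        · rw [Nat.mod_eq_of_lt hj]
        · have h1 : q + j = (q + (j - d)) + d := by omega
          rw [h1, hper _ (by omega), ih (j - d) (by omega)]
          have h4 : j % d = (j - d) % d := by
            conv_lhs => rw [show j = j - d + d from by omega]
            rw [Nat.add_mod_right]
          rw [h4]
    set c : List G.E := List.ofFn (fun k : Fin d => x (q + k)) with hc
    have hclen : c.length = d := by simp [hc]
    have hcpath : G.IsPath (G.r (x q)) c (G.r (x q)) := by
      have := isPath_ofFn hx d q
      rwa [hper q le_rfl] at this
    have hcne : c ≠ [] := by
      intro h; rw [h] at hclen; simp at hclen; omega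
    have hcyc : G.IsCycle c := ⟨hcne, ⟨_, hcpath⟩⟩
    have hmem : ∀ j, x (q + j) ∈ c := by
      intro j
      rw [hmod j, hc]
      have : x (q + j % d) = (fun k : Fin d => x (q + k)) ⟨j % d, Nat.mod_lt _ hd0⟩ := rfl
      rw [this]
      exact List.mem_ofFn.mpr ⟨_, rfl⟩
    have claim : ∀ j, y j = x (q + j) := by
      intro j
      induction j with
      | zero => exact hn _ c hcyc hcpath _ (hmem 0) _ hy0
      | succ j ih =>
        have hr : G.r (y (j + 1)) = G.r (x (q + (j + 1))) := by
          rw [← hy j, ih]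
          exact hx (q + j)
        exact hn _ c hcyc hcpath _ (hmem (j + 1)) _ hr
    funext i
    unfold prepend
    simp only [List.length_ofFn]
    by_cases h1 : i < q
    · rw [dif_pos (show i < p from by omega), dif_pos h1]
      simp [List.get_ofFn]
    · by_cases h2 : i < p
      · rw [dif_pos h2, dif_neg h1]
        rw [claim (i - q), show q + (i - q) = i from by omega]
        simp [List.get_ofFn]
      · rw [dif_neg h2, dif_neg h1]
        rw [claim (i - p), claim (i - q), show q + (i - q) = i from by omega]
        have h6 := hper (q + (i - p)) (by omega)
        rw [show q + (i - p) + d = i from by omega] at h6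
        exact h6.symm

end DirGraph

/-- A directed graph (viewed as a 1-graph) is tight iff no cycle
has an entrance. -/
theorem tight_iff_no_cycle_has_entrance (G : DirGraph)
    (hrf : G.RowFinite) (hns : G.NoSources) :
    G.Tight ↔ G.NoCycleHasEntrance := by
  constructor
  · -- Tight → no cycle has an entrance
    intro ht u0 c hc hpath f hf e hre
    obtain ⟨c₁, c₂, hsplit⟩ := List.append_of_mem hf
    rw [hsplit] at hpath
    obtain ⟨w, h1, h2⟩ := G.isPath_append_split c₁ hpath
    cases h2 with
    | cons _ hp2 =>
    -- h1 : IsPath u0 c₁ (G.r f), hp2 : IsPath (G.s f) c₂ u0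
    set c' : List G.E := (f :: c₂) ++ c₁ with hc'
    have hcp : G.IsPath (G.r f) c' (G.r f) :=
      DirGraph.isPath_append_s13 (DirGraph.IsPath.cons f hp2) h1
    set n := c'.length with hnn
    have hn0 : 0 < n := by simp [hnn, hc']
    set x : ℕ → G.E := fun i => c'.get ⟨i % n, Nat.mod_lt _ hn0⟩ with hxdef
    have hxval : ∀ (j k : ℕ) (hk : k < n), j % n = k → x j = c'.get ⟨k, hk⟩ := by
      intro j k hk h
      show c'.get ⟨j % n, Nat.mod_lt _ hn0⟩ = _
      subst h
      rfl
    have hgf : c'.get ⟨0, hn0⟩ = f := rfl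
    have hxinf : G.InfPath x := by
      intro i
      have hi : i % n < n := Nat.mod_lt _ hn0
      have hgs := DirGraph.isPath_get_s hcp (i % n) hi
      show G.s (c'.get ⟨i % n, Nat.mod_lt _ hn0⟩) = G.r (x (i + 1))
      by_cases h2 : i % n + 1 < n
      · rw [hgs, dif_pos h2]
        have h4 : (i + 1) % n = i % n + 1 := by
          conv_lhs => rw [show i + 1 = n * (i / n) + (i % n + 1) from by
            have := Nat.div_add_mod i n; omega]
          rw [Nat.mul_add_mod, Nat.mod_eq_of_lt h2]
        rw [hxval (i + 1) (i % n + 1) h2 h4]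
      · rw [hgs, dif_neg h2]
        have h4 : (i + 1) % n = 0 := by
          rw [show i + 1 = (i / n + 1) * n from by
            have h5 := Nat.div_add_mod' i n
            have h6 : (i / n + 1) * n = i / n * n + n := by ring
            omega]
          exact Nat.mul_mod_left _ _
        rw [hxval (i + 1) 0 hn0 h4, hgf]
    have hsh : shift n x = shift 0 x := by
      funext i
      show x (i + n) = x (i + 0)
      rw [Nat.add_zero,
        hxval (i + n) (i % n) (Nat.mod_lt _ hn0) (Nat.add_mod_right i n)]
    obtain ⟨a, b, v, u, hpa, hpb, hv, hxa, hshab, hdiff, hzero⟩ := ht x hxinf n 0 hsh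
    have hlen : a.length = b.length + n := by omega
    set m := a.length % n with hm
    have hmlt : m < n := Nat.mod_lt _ hn0
    have hu : u = G.r (x a.length) :=
      DirGraph.isPath_end_eq hxinf hpa hv.symm (fun i h => (hxa i h).symm)
    have hxam : x a.length = c'.get ⟨m, hmlt⟩ := hxval _ _ _ rfl
    have hcp2 : G.IsPath (G.r f) (c'.take m ++ c'.drop m) (G.r f) := by
      rw [List.take_append_drop]; exact hcp
    obtain ⟨w2, htk, hdp⟩ := G.isPath_append_split _ hcp2
    have htlen : (c'.drop m).length = n - m := by simp [hnn]
    have ht0 : 0 < (c'.drop m).length := by omega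
    have hw2 : w2 = G.r ((c'.drop m).get ⟨0, ht0⟩) := DirGraph.isPath_r_head hdp ht0
    have hdropget : (c'.drop m).get ⟨0, ht0⟩ = c'.get ⟨m, hmlt⟩ := by
      simp only [List.get_eq_getElem]
      exact List.getElem_drop
    have hepath : G.IsPath (G.r f) [e] (G.s e) := by
      have := DirGraph.IsPath.cons (G := G) e (DirGraph.IsPath.nil (G.s e))
      rwa [hre] at this
    have hLpath : G.IsPath w2 (c'.drop m ++ [e]) (G.s e) :=
      DirGraph.isPath_append_s13 hdp hepath
    obtain ⟨z, hz, hz0⟩ := G.exists_infPath hns (G.s e)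
    set y : ℕ → G.E := G.prepend (c'.drop m ++ [e]) z with hy
    have hyinf : G.InfPath y := DirGraph.infPath_prepend hLpath hz hz0
    have hLlen : (c'.drop m ++ [e]).length = (n - m) + 1 := by
      simp [htlen]
    have hy0 : y 0 = (c'.drop m).get ⟨0, ht0⟩ := by
      show G.prepend _ z 0 = _
      unfold DirGraph.prepend
      rw [dif_pos (show 0 < (c'.drop m ++ [e]).length from by omega)]
      simp only [List.get_eq_getElem]
      exact List.getElem_append_left ht0
    have hyr : G.r (y 0) = u := by
      rw [hy0, hu, hxam, ← hdropget]
    have hzeq := congrFun (hzero y hyinf hyr) (b.length + (n - m))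
    have hyval : y (n - m) = e := by
      show G.prepend _ z (n - m) = e
      unfold DirGraph.prepend
      rw [dif_pos (show n - m < (c'.drop m ++ [e]).length from by omega)]
      simp only [List.get_eq_getElem]
      exact List.getElem_concat_length htlen.symm _
    have hrhs : G.prepend b y (b.length + (n - m)) = e := by
      unfold DirGraph.prepend
      rw [dif_neg (show ¬ b.length + (n - m) < b.length from by omega)]
      rw [show b.length + (n - m) - b.length = n - m from by omega, hyval]
    have hlhs : G.prepend a y (b.length + (n - m)) = f := by
      unfold DirGraph.prepend
      by_cases hm0 : m = 0
      · rw [dif_neg (show ¬ b.length + (n - m) < a.length from by omega)]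
        rw [show b.length + (n - m) - a.length = 0 from by omega, hy0, hdropget,
          DirGraph.get_congr hm0 hmlt hn0, hgf]
      · rw [dif_pos (show b.length + (n - m) < a.length from by omega)]
        rw [← hxa _ _]
        have hmb : m = b.length % n := by
          rw [hm, hlen, Nat.add_mod_right]
        have hdm := Nat.div_add_mod b.length n
        rw [← hmb] at hdm
        have h13 : b.length + (n - m) = n * (b.length / n + 1) := by
          have : n * (b.length / n + 1) = n * (b.length / n) + n := by ring
          omega
        rw [hxval (b.length + (n - m)) 0 hn0 (by rw [h13]; exact Nat.mul_mod_right _ _),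
          hgf]
    rw [hlhs, hrhs] at hzeq
    exact hzeq.symm
  · -- no cycle has an entrance → Tight
    intro hn x hx p q hs
    have hx0q : x p = x q := by
      have := congrFun hs 0
      simpa [shift] using this
    refine ⟨List.ofFn fun k : Fin p => x k, List.ofFn fun k : Fin q => x k,
      G.r (x 0), G.r (x p), ?_, ?_, rfl, ?_, ?_, ?_, ?_⟩
    · have := DirGraph.isPath_ofFn hx p 0
      simpa using this
    · have := DirGraph.isPath_ofFn hx q 0
      simp only [Nat.zero_add] at this
      rw [hx0q]
      exact this
    · intro i h
      simp [List.get_ofFn]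
    · simpa only [List.length_ofFn] using hs
    · simp [List.length_ofFn]
    · intro y hy hy0
      rcases le_total q p with hle | hle
      · exact DirGraph.key hn hx hle hs y hy (by rw [hy0, hx0q])
      · exact (DirGraph.key hn hx hle hs.symm y hy (by rw [hy0])).symm
end
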